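/- A local POE model equals a base POE model: for transformations H₁,...,H_{n+1} ∈ SE(3) and normalized twists ξ̄₁^{H₁},...,ξ̄ₙ^{Hₙ}, the product H₁ exp(ξ̂₁^{H₁}q₁) H₂ exp(ξ̂₂^{H₂}q₂) ⋯ Hₙ exp(ξ̂ₙ^{Hₙ}qₙ) H_{n+1} equals exp(ξ̂₁q₁) exp(ξ̂₂q₂) ⋯ exp(ξ̂ₙqₙ) · H_T, where ξᵢ = Ad(H₁H₂⋯Hᵢ) ξᵢ^{Hᵢ} and H_T = H₁H₂⋯H_{n+1}. (It suffices to prove the case n = 2.) -/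

import Mathlib

open Matrix Real

noncomputable section

/-- Skew-symmetric matrix of a 3-vector. -/
def skew (w : Fin 3 → ℝ) : Matrix (Fin 3) (Fin 3) ℝ :=
  !![0, -w 2, w 1; w 2, 0, -w 0; -w 1, w 0, 0]

/-- 4×4 twist matrix of twist coordinates (ω, v). -/
def twistM (w v : Fin 3 → ℝ) : Matrix (Fin 4) (Fin 4) ℝ :=
  !![0, -w 2, w 1, v 0;
     w 2, 0, -w 0, v 1;
     -w 1, w 0, 0, v 2;
     0, 0, 0, 0]

/-- Homogeneous transformation [[R,t],[0,1]]. -/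
def homog (R : Matrix (Fin 3) (Fin 3) ℝ) (t : Fin 3 → ℝ) : Matrix (Fin 4) (Fin 4) ℝ :=
  !![R 0 0, R 0 1, R 0 2, t 0;
     R 1 0, R 1 1, R 1 2, t 1;
     R 2 0, R 2 1, R 2 2, t 2;
     0, 0, 0, 1]

def isSO3 (R : Matrix (Fin 3) (Fin 3) ℝ) : Prop := R * Rᵀ = 1 ∧ R.det = 1

def isSE3 (H : Matrix (Fin 4) (Fin 4) ℝ) : Prop :=
  ∃ R t, isSO3 R ∧ H = homog R t

def isTwist (X : Matrix (Fin 4) (Fin 4) ℝ) : Prop := ∃ w v, X = twistM w v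

def RZ (θ : ℝ) : Matrix (Fin 4) (Fin 4) ℝ :=
  homog !![Real.cos θ, -Real.sin θ, 0; Real.sin θ, Real.cos θ, 0; 0, 0, 1] ![0, 0, 0]

def TZ (d : ℝ) : Matrix (Fin 4) (Fin 4) ℝ := homog 1 ![0, 0, d]

def RX (α : ℝ) : Matrix (Fin 4) (Fin 4) ℝ :=
  homog !![1, 0, 0; 0, Real.cos α, -Real.sin α; 0, Real.sin α, Real.cos α] ![0, 0, 0]

def TX (a : ℝ) : Matrix (Fin 4) (Fin 4) ℝ := homog 1 ![a, 0, 0]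

/-- Rotation block of a 4×4 homogeneous transformation. -/
def rotOf (H : Matrix (Fin 4) (Fin 4) ℝ) : Matrix (Fin 3) (Fin 3) ℝ :=
  fun i j => H i.castSucc j.castSucc

/-- Translation column of a 4×4 homogeneous transformation. -/
def transOf (H : Matrix (Fin 4) (Fin 4) ℝ) : Fin 3 → ℝ :=
  fun i => H i.castSucc 3

/-- The adjoint action Ad(H) of a homogeneous transformation on twist
coordinates (ω, v) ∈ ℝ³ × ℝ³, given by (Rω, t̂Rω + Rv). -/
def AdAct (H : Matrix (Fin 4) (Fin 4) ℝ) (ξ : (Fin 3 → ℝ) × (Fin 3 → ℝ)) :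
    (Fin 3 → ℝ) × (Fin 3 → ℝ) :=
  (rotOf H *ᵥ ξ.1, skew (transOf H) *ᵥ (rotOf H *ᵥ ξ.1) + rotOf H *ᵥ ξ.2)

section AuxPOE

lemma skew_cross_aux (R : Matrix (Fin 3) (Fin 3) ℝ) (ω : Fin 3 → ℝ) :
    skew (R *ᵥ ω) * R = (Rᵀ).adjugate * skew ω := by
  rw [Matrix.adjugate_fin_three]
  ext i j
  fin_cases i <;> fin_cases j <;>
    simp [skew, Matrix.mul_apply, Matrix.mulVec, dotProduct, Fin.sum_univ_three,
      Matrix.transpose_apply] <;> ring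

lemma so3_adjugate_aux (R : Matrix (Fin 3) (Fin 3) ℝ) (hR : R * Rᵀ = 1) (hd : R.det = 1) :
    R.adjugate = Rᵀ := by
  have h := Matrix.adjugate_mul R
  calc R.adjugate = R.adjugate * (R * Rᵀ) := by rw [hR, mul_one]
    _ = (R.adjugate * R) * Rᵀ := by rw [mul_assoc]
    _ = Rᵀ := by rw [h, hd, one_smul, one_mul]

lemma skew_conj_aux (R : Matrix (Fin 3) (Fin 3) ℝ) (ω : Fin 3 → ℝ)
    (hR : R * Rᵀ = 1) (hd : R.det = 1) :
    skew (R *ᵥ ω) * R = R * skew ω := by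
  rw [skew_cross_aux, ← Matrix.adjugate_transpose, so3_adjugate_aux R hR hd,
    Matrix.transpose_transpose]

lemma homog_mul_aux (R S : Matrix (Fin 3) (Fin 3) ℝ) (t u : Fin 3 → ℝ) :
    homog R t * homog S u = homog (R * S) (R *ᵥ u + t) := by
  ext i j
  fin_cases i <;> fin_cases j <;>
    simp [homog, Matrix.mul_apply, Matrix.mulVec, dotProduct, Fin.sum_univ_four,
      Fin.sum_univ_three]

lemma homog_one_aux : homog 1 0 = (1 : Matrix (Fin 4) (Fin 4) ℝ) := by
  ext i j
  fin_cases i <;> fin_cases j <;>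
    simp [homog, Matrix.one_apply, Matrix.vecHead, Matrix.vecTail]

lemma rotOf_homog_aux (R : Matrix (Fin 3) (Fin 3) ℝ) (t : Fin 3 → ℝ) :
    rotOf (homog R t) = R := by
  ext i j
  fin_cases i <;> fin_cases j <;>
    simp [rotOf, homog, show Fin.castSucc 2 = (2 : Fin 4) from rfl, Matrix.vecHead,
      Matrix.vecTail]

lemma transOf_homog_aux (R : Matrix (Fin 3) (Fin 3) ℝ) (t : Fin 3 → ℝ) :
    transOf (homog R t) = t := by
  ext i
  fin_cases i <;>
    simp [transOf, homog, show Fin.castSucc 2 = (2 : Fin 4) from rfl, Matrix.vecHead,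
      Matrix.vecTail]

/-- Generic 4×4 block matrix with zero last row. -/
def blkAux (B : Matrix (Fin 3) (Fin 3) ℝ) (c : Fin 3 → ℝ) : Matrix (Fin 4) (Fin 4) ℝ :=
  !![B 0 0, B 0 1, B 0 2, c 0;
     B 1 0, B 1 1, B 1 2, c 1;
     B 2 0, B 2 1, B 2 2, c 2;
     0, 0, 0, 0]

lemma homog_mul_twist_aux (R : Matrix (Fin 3) (Fin 3) ℝ) (t ω v : Fin 3 → ℝ) :
    homog R t * twistM ω v = blkAux (R * skew ω) (R *ᵥ v) := by
  ext i j
  fin_cases i <;> fin_cases j <;>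
    simp [homog, twistM, blkAux, skew, Matrix.mul_apply, Matrix.mulVec, dotProduct,
      Fin.sum_univ_four, Fin.sum_univ_three, Matrix.vecHead, Matrix.vecTail]

lemma twist_mul_homog_aux (R : Matrix (Fin 3) (Fin 3) ℝ) (t ω v : Fin 3 → ℝ) :
    twistM ω v * homog R t = blkAux (skew ω * R) (skew ω *ᵥ t + v) := by
  ext i j
  fin_cases i <;> fin_cases j <;>
    simp [homog, twistM, blkAux, skew, Matrix.mul_apply, Matrix.mulVec, dotProduct,
      Fin.sum_univ_four, Fin.sum_univ_three, Matrix.vecHead, Matrix.vecTail]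

lemma skew_anti_aux (a b : Fin 3 → ℝ) : skew a *ᵥ b = -(skew b *ᵥ a) := by
  funext i
  fin_cases i <;>
    simp [skew, Matrix.mulVec, dotProduct, Fin.sum_univ_three, Matrix.vecHead,
      Matrix.vecTail] <;> ring

lemma conj_twist_aux (R : Matrix (Fin 3) (Fin 3) ℝ) (t ω v : Fin 3 → ℝ)
    (hR : R * Rᵀ = 1) (hd : R.det = 1) :
    homog R t * twistM ω v =
      twistM (R *ᵥ ω) (skew t *ᵥ (R *ᵥ ω) + R *ᵥ v) * homog R t := by
  rw [homog_mul_twist_aux, twist_mul_homog_aux]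
  have h1 : skew (R *ᵥ ω) * R = R * skew ω := skew_conj_aux R ω hR hd
  have h2 : skew (R *ᵥ ω) *ᵥ t + (skew t *ᵥ (R *ᵥ ω) + R *ᵥ v) = R *ᵥ v := by
    rw [skew_anti_aux (R *ᵥ ω) t]
    abel
  rw [h1, h2]

lemma homog_unit_aux (R : Matrix (Fin 3) (Fin 3) ℝ) (t : Fin 3 → ℝ)
    (hR : R * Rᵀ = 1) :
    homog R t * homog Rᵀ (-(Rᵀ *ᵥ t)) = 1 ∧ homog Rᵀ (-(Rᵀ *ᵥ t)) * homog R t = 1 := by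
  have hR' : Rᵀ * R = 1 := mul_eq_one_comm.mp hR
  constructor
  · rw [homog_mul_aux, hR]
    have : R *ᵥ (-(Rᵀ *ᵥ t)) + t = 0 := by
      rw [Matrix.mulVec_neg, Matrix.mulVec_mulVec, hR, Matrix.one_mulVec]
      abel
    rw [this, homog_one_aux]
  · rw [homog_mul_aux, hR']
    have : Rᵀ *ᵥ t + -(Rᵀ *ᵥ t) = 0 := by abel
    rw [this, homog_one_aux]

lemma conj_exp_aux (R : Matrix (Fin 3) (Fin 3) ℝ) (t ω v : Fin 3 → ℝ) (q : ℝ)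
    (hR : R * Rᵀ = 1) (hd : R.det = 1) :
    homog R t * NormedSpace.exp (q • twistM ω v) =
      NormedSpace.exp (q • twistM (R *ᵥ ω) (skew t *ᵥ (R *ᵥ ω) + R *ᵥ v)) *
        homog R t := by
  obtain ⟨hu1, hu2⟩ := homog_unit_aux R t hR
  let U : (Matrix (Fin 4) (Fin 4) ℝ)ˣ := ⟨homog R t, homog Rᵀ (-(Rᵀ *ᵥ t)), hu1, hu2⟩
  have key : (U : Matrix (Fin 4) (Fin 4) ℝ) * (q • twistM ω v) *
      ((U⁻¹ : _ˣ) : Matrix (Fin 4) (Fin 4) ℝ) =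
      q • twistM (R *ᵥ ω) (skew t *ᵥ (R *ᵥ ω) + R *ᵥ v) := by
    show homog R t * (q • twistM ω v) * homog Rᵀ (-(Rᵀ *ᵥ t)) = _
    rw [mul_smul_comm, smul_mul_assoc, conj_twist_aux R t ω v hR hd, mul_assoc, hu1, mul_one]
  have h := Matrix.exp_units_conj U (q • twistM ω v)
  rw [key] at h
  have h' : NormedSpace.exp (q • twistM (R *ᵥ ω) (skew t *ᵥ (R *ᵥ ω) + R *ᵥ v)) =
      homog R t * NormedSpace.exp (q • twistM ω v) * homog Rᵀ (-(Rᵀ *ᵥ t)) := h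
  have hx : homog R t * NormedSpace.exp (q • twistM ω v) * homog Rᵀ (-(Rᵀ *ᵥ t)) *
      homog R t = homog R t * NormedSpace.exp (q • twistM ω v) := by
    rw [mul_assoc (homog R t * NormedSpace.exp (q • twistM ω v)), hu2, mul_one]
  rw [← hx, ← h']

end AuxPOE

/-- a local POE model equals a base POE model (case n = 2):
H₁ e^{ξ̂₁q₁} H₂ e^{ξ̂₂q₂} H₃ = e^{ξ̂₁′q₁} e^{ξ̂₂′q₂} (H₁H₂H₃),
where ξ₁′ = Ad(H₁)ξ₁ and ξ₂′ = Ad(H₁H₂)ξ₂. -/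
theorem local_poe_eq_base_poe (H₁ H₂ H₃ : Matrix (Fin 4) (Fin 4) ℝ)
    (h₁ : isSE3 H₁) (h₂ : isSE3 H₂) (h₃ : isSE3 H₃)
    (ω₁ v₁ ω₂ v₂ : Fin 3 → ℝ) (q₁ q₂ : ℝ) :
    H₁ * NormedSpace.exp (q₁ • twistM ω₁ v₁) * H₂ *
        NormedSpace.exp (q₂ • twistM ω₂ v₂) * H₃ =
      NormedSpace.exp
          (q₁ • twistM (AdAct H₁ (ω₁, v₁)).1 (AdAct H₁ (ω₁, v₁)).2) *
        NormedSpace.exp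
          (q₂ • twistM (AdAct (H₁ * H₂) (ω₂, v₂)).1 (AdAct (H₁ * H₂) (ω₂, v₂)).2) *
        (H₁ * H₂ * H₃) := by
  obtain ⟨R₁, t₁, ⟨hR₁, hd₁⟩, rfl⟩ := h₁
  obtain ⟨R₂, t₂, ⟨hR₂, hd₂⟩, rfl⟩ := h₂
  have h12 : homog R₁ t₁ * homog R₂ t₂ = homog (R₁ * R₂) (R₁ *ᵥ t₂ + t₁) :=
    homog_mul_aux R₁ R₂ t₁ t₂
  have hR12 : (R₁ * R₂) * (R₁ * R₂)ᵀ = 1 := by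
    rw [Matrix.transpose_mul, mul_assoc, ← mul_assoc R₂, hR₂, one_mul, hR₁]
  have hd12 : (R₁ * R₂).det = 1 := by rw [Matrix.det_mul, hd₁, hd₂, one_mul]
  have hAd1 : AdAct (homog R₁ t₁) (ω₁, v₁) =
      (R₁ *ᵥ ω₁, skew t₁ *ᵥ (R₁ *ᵥ ω₁) + R₁ *ᵥ v₁) := by
    simp [AdAct, rotOf_homog_aux, transOf_homog_aux]
  have hAd2 : AdAct (homog R₁ t₁ * homog R₂ t₂) (ω₂, v₂) =
      ((R₁ * R₂) *ᵥ ω₂,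
        skew (R₁ *ᵥ t₂ + t₁) *ᵥ ((R₁ * R₂) *ᵥ ω₂) + (R₁ * R₂) *ᵥ v₂) := by
    rw [h12]
    simp [AdAct, rotOf_homog_aux, transOf_homog_aux]
  rw [hAd1, hAd2]
  have c1 := conj_exp_aux R₁ t₁ ω₁ v₁ q₁ hR₁ hd₁
  have c2 := conj_exp_aux (R₁ * R₂) (R₁ *ᵥ t₂ + t₁) ω₂ v₂ q₂ hR12 hd12
  calc homog R₁ t₁ * NormedSpace.exp (q₁ • twistM ω₁ v₁) * homog R₂ t₂ *
        NormedSpace.exp (q₂ • twistM ω₂ v₂) * H₃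
      = (homog R₁ t₁ * NormedSpace.exp (q₁ • twistM ω₁ v₁)) *
          ((homog R₂ t₂ * NormedSpace.exp (q₂ • twistM ω₂ v₂)) * H₃) := by
        simp only [mul_assoc]
    _ = (NormedSpace.exp (q₁ • twistM (R₁ *ᵥ ω₁) (skew t₁ *ᵥ (R₁ *ᵥ ω₁) + R₁ *ᵥ v₁)) *
          homog R₁ t₁) *
          ((homog R₂ t₂ * NormedSpace.exp (q₂ • twistM ω₂ v₂)) * H₃) := by
        rw [c1]
    _ = NormedSpace.exp (q₁ • twistM (R₁ *ᵥ ω₁) (skew t₁ *ᵥ (R₁ *ᵥ ω₁) + R₁ *ᵥ v₁)) *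
          ((homog (R₁ * R₂) (R₁ *ᵥ t₂ + t₁) * NormedSpace.exp (q₂ • twistM ω₂ v₂)) *
            H₃) := by
        rw [← h12]; simp only [mul_assoc]
    _ = NormedSpace.exp (q₁ • twistM (R₁ *ᵥ ω₁) (skew t₁ *ᵥ (R₁ *ᵥ ω₁) + R₁ *ᵥ v₁)) *
          ((NormedSpace.exp (q₂ • twistM ((R₁ * R₂) *ᵥ ω₂)
              (skew (R₁ *ᵥ t₂ + t₁) *ᵥ ((R₁ * R₂) *ᵥ ω₂) + (R₁ * R₂) *ᵥ v₂)) *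
            homog (R₁ * R₂) (R₁ *ᵥ t₂ + t₁)) * H₃) := by
        rw [c2]
    _ = NormedSpace.exp (q₁ • twistM (R₁ *ᵥ ω₁) (skew t₁ *ᵥ (R₁ *ᵥ ω₁) + R₁ *ᵥ v₁)) *
          NormedSpace.exp (q₂ • twistM ((R₁ * R₂) *ᵥ ω₂)
              (skew (R₁ *ᵥ t₂ + t₁) *ᵥ ((R₁ * R₂) *ᵥ ω₂) + (R₁ * R₂) *ᵥ v₂)) *
          (homog R₁ t₁ * homog R₂ t₂ * H₃) := by
        rw [h12]; simp only [mul_assoc]
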